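/- For probability distributions P, Q with strictly positive entries, Δ(P‖Q) ≤ (32/27)·K(P‖Q), where K(P‖Q) = ∑ p_i ln(p_i/q_i) is the Kullback–Leibler divergence. -/

import Mathlib

open Real Set

private noncomputable def Ffun : ℝ → ℝ := fun t => 32/27*(t*Real.log t - t + 1) - (t-1)^2/(t+1)
private noncomputable def Gfun : ℝ → ℝ := fun t => 32/27 * Real.log t - (t-1)*(t+3)/(t+1)^2

private lemma hasDerivG (t : ℝ) (ht : 0 < t) :
    HasDerivAt Gfun (32/(27*t) - 8/(t+1)^3) t := by
  have h1 : (t+1) ≠ 0 := by positivity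
  have hlog : HasDerivAt Real.log t⁻¹ t := Real.hasDerivAt_log (ne_of_gt ht)
  have hu : HasDerivAt (fun t : ℝ => (t-1)*(t+3)) (2*t+2) t := by
    have := ((hasDerivAt_id t).sub_const 1).mul ((hasDerivAt_id t).add_const 3)
    refine this.congr_deriv ?_; simp only [id_eq]; ring
  have hv : HasDerivAt (fun t : ℝ => (t+1)^2) (2*(t+1)) t := by
    have := ((hasDerivAt_id t).add_const 1).pow 2
    refine this.congr_deriv ?_; simp only [id_eq]; ring
  have h2 : HasDerivAt (fun t : ℝ => (t-1)*(t+3)/(t+1)^2)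
      (8/(t+1)^3) t := by
    have := hu.div hv (by positivity)
    refine this.congr_deriv ?_
    field_simp
    ring
  have := (hlog.const_mul (32/27 : ℝ)).sub h2
  refine this.congr_deriv ?_
  field_simp

private lemma hasDerivF (t : ℝ) (ht : 0 < t) :
    HasDerivAt Ffun (Gfun t) t := by
  have h1 : (t+1) ≠ 0 := by positivity
  have hlog : HasDerivAt Real.log t⁻¹ t := Real.hasDerivAt_log (ne_of_gt ht)
  have h2 : HasDerivAt (fun t : ℝ => t * Real.log t) (Real.log t + 1) t := by
    have := (hasDerivAt_id t).mul hlog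
    refine this.congr_deriv ?_
    field_simp
    simp only [id_eq]; ring
  have hu : HasDerivAt (fun t : ℝ => (t-1)^2) (2*(t-1)) t := by
    have := ((hasDerivAt_id t).sub_const 1).pow 2
    refine this.congr_deriv ?_; simp only [id_eq]; ring
  have hv : HasDerivAt (fun t : ℝ => t+1) 1 t := (hasDerivAt_id t).add_const 1
  have h3 : HasDerivAt (fun t : ℝ => (t-1)^2/(t+1)) ((t-1)*(t+3)/(t+1)^2) t := by
    have := hu.div hv h1
    refine this.congr_deriv ?_
    field_simp
    ring
  have := (((h2.sub (hasDerivAt_id t)).add_const 1).const_mul (32/27 : ℝ)).sub h3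
  refine this.congr_deriv ?_
  unfold Gfun
  ring

private lemma G_nonneg (t : ℝ) (ht : 1 ≤ t) : 0 ≤ Gfun t := by
  have hmono : MonotoneOn Gfun (Ioi (0:ℝ)) := by
    apply monotoneOn_of_deriv_nonneg (convex_Ioi 0)
    · exact fun x hx => (hasDerivG x hx).continuousAt.continuousWithinAt
    · rw [interior_Ioi]
      exact fun x hx => (hasDerivG x hx).differentiableAt.differentiableWithinAt
    · rw [interior_Ioi]
      intro x hx
      rw [(hasDerivG x hx).deriv]
      have hx' : (0:ℝ) < x := hx
      rw [sub_nonneg, div_le_div_iff₀ (by positivity) (by positivity)]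
      nlinarith [sq_nonneg (2*x-1), sq_nonneg x, mul_pos hx' hx']
  have h1 : Gfun 1 = 0 := by unfold Gfun; simp
  have := hmono (mem_Ioi.2 one_pos) (mem_Ioi.2 (lt_of_lt_of_le one_pos ht)) ht
  linarith [this]

private lemma G_nonpos (t : ℝ) (ht : 0 < t) (ht1 : t ≤ 1) : Gfun t ≤ 0 := by
  have hmono : MonotoneOn Gfun (Ioi (0:ℝ)) := by
    apply monotoneOn_of_deriv_nonneg (convex_Ioi 0)
    · exact fun x hx => (hasDerivG x hx).continuousAt.continuousWithinAt
    · rw [interior_Ioi]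
      exact fun x hx => (hasDerivG x hx).differentiableAt.differentiableWithinAt
    · rw [interior_Ioi]
      intro x hx
      rw [(hasDerivG x hx).deriv]
      have hx' : (0:ℝ) < x := hx
      rw [sub_nonneg, div_le_div_iff₀ (by positivity) (by positivity)]
      nlinarith [sq_nonneg (2*x-1), sq_nonneg x, mul_pos hx' hx']
  have h1 : Gfun 1 = 0 := by unfold Gfun; simp
  have := hmono (mem_Ioi.2 ht) (mem_Ioi.2 one_pos) ht1
  linarith [this]

private lemma F_one : Ffun 1 = 0 := by unfold Ffun; simp

private lemma F_nonneg (t : ℝ) (ht : 0 < t) : 0 ≤ Ffun t := by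
  rcases le_or_gt 1 t with h | h
  · have hmono : MonotoneOn Ffun (Icc (1:ℝ) t) := by
      apply monotoneOn_of_deriv_nonneg (convex_Icc 1 t)
      · exact fun x hx => (hasDerivF x (lt_of_lt_of_le one_pos hx.1)).continuousAt.continuousWithinAt
      · intro x hx
        rw [interior_Icc] at hx
        exact (hasDerivF x (lt_trans one_pos hx.1)).differentiableAt.differentiableWithinAt
      · intro x hx
        rw [interior_Icc] at hx
        rw [(hasDerivF x (lt_trans one_pos hx.1)).deriv]
        exact G_nonneg x hx.1.le
    have := hmono (left_mem_Icc.2 h) (right_mem_Icc.2 h) h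
    rw [F_one] at this
    exact this
  · have hmono : AntitoneOn Ffun (Icc t 1) := by
      apply antitoneOn_of_deriv_nonpos (convex_Icc t 1)
      · exact fun x hx => (hasDerivF x (lt_of_lt_of_le ht hx.1)).continuousAt.continuousWithinAt
      · intro x hx
        rw [interior_Icc] at hx
        exact (hasDerivF x (lt_trans ht hx.1)).differentiableAt.differentiableWithinAt
      · intro x hx
        rw [interior_Icc] at hx
        rw [(hasDerivF x (lt_trans ht hx.1)).deriv]
        exact G_nonpos x (lt_trans ht hx.1) hx.2.le
    have := hmono (left_mem_Icc.2 h.le) (right_mem_Icc.2 h.le) h.le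
    rw [F_one] at this
    exact this

private lemma key_ineq (a b : ℝ) (ha : 0 < a) (hb : 0 < b) :
    (a - b)^2 / (a + b) ≤ 32/27 * (a * Real.log (a/b) - a + b) := by
  have ht : 0 < a / b := div_pos ha hb
  have hF := F_nonneg (a/b) ht
  unfold Ffun at hF
  have hab : (0:ℝ) < a + b := by linarith
  have h1 : a/b * Real.log (a/b) - a/b + 1 = (a * Real.log (a/b) - a + b)/b := by
    field_simp
  have h2 : (a/b - 1)^2 / (a/b + 1) = (a-b)^2/(b*(a+b)) := by
    rw [div_eq_div_iff (by positivity) (by positivity)]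
    field_simp
  rw [h1, h2] at hF
  rw [sub_nonneg] at hF
  have e1 : b * ((a-b)^2/(b*(a+b))) = (a-b)^2/(a+b) := by
    field_simp
  have e2 : b * (32/27 * ((a * Real.log (a/b) - a + b)/b)) = 32/27 * (a * Real.log (a/b) - a + b) := by
    field_simp
  have h3 := mul_le_mul_of_nonneg_left hF hb.le
  rw [e1, e2] at h3
  exact h3

theorem stmt_9 (n : ℕ) (p q : Fin n → ℝ)
    (hp : ∀ i, 0 < p i) (hq : ∀ i, 0 < q i)
    (hp1 : ∑ i, p i = 1) (hq1 : ∑ i, q i = 1) :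
    ∑ i, (p i - q i)^2 / (p i + q i) ≤
      32 / 27 * ∑ i, p i * Real.log (p i / q i) := by
  have h : ∑ i, (p i - q i)^2 / (p i + q i) ≤
      ∑ i, 32/27 * (p i * Real.log (p i / q i) - p i + q i) :=
    Finset.sum_le_sum fun i _ => key_ineq (p i) (q i) (hp i) (hq i)
  calc ∑ i, (p i - q i)^2 / (p i + q i)
      ≤ ∑ i, 32/27 * (p i * Real.log (p i / q i) - p i + q i) := h
    _ = 32/27 * (∑ i, p i * Real.log (p i / q i) - ∑ i, p i + ∑ i, q i) := by
        rw [← Finset.mul_sum]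
        congr 1
        rw [Finset.sum_add_distrib, Finset.sum_sub_distrib]
    _ = 32 / 27 * ∑ i, p i * Real.log (p i / q i) := by
        rw [hp1, hq1]; ring
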